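/- Let λ₁, …, λₙ ∈ C̄⁺ be linearly independent vectors in the closed positive cone of a real quadratic space of signature (1, p−1), with n ≥ 2. Then for any A with 0 ≤ A ≤ 1 − 2/n, there exists a constant c > 0 such that Q(t₁λ₁ + ⋯ + tₙλₙ) ≥ c · t₁^{2/n + A} · (t₂⋯tₙ)^{2/n − A/(n−1)} uniformly for all t₁, …, tₙ ∈ ℝ_{≥0}. -/

import Mathlib

open Finset

section aux2
variable {p : ℕ}

noncomputable def lorB (z : Fin p) : LinearMap.BilinForm ℝ (Fin p → ℝ) :=
  LinearMap.mk₂ ℝ (fun x y => x z * y z - ∑ i ∈ univ.erase z, x i * y i)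
    (by intro x x' y
        simp only [Pi.add_apply, add_mul]
        rw [Finset.sum_add_distrib]; ring)
    (by intro c x y
        simp only [Pi.smul_apply, smul_eq_mul, mul_sub, Finset.mul_sum]
        congr 1
        · ring
        · exact Finset.sum_congr rfl fun i _ => by ring)
    (by intro x y y'
        simp only [Pi.add_apply, mul_add]
        rw [Finset.sum_add_distrib]; ring)
    (by intro c x y
        simp only [Pi.smul_apply, smul_eq_mul, mul_sub, Finset.mul_sum]
        congr 1
        · ring
        · exact Finset.sum_congr rfl fun i _ => by ring)

lemma lorB_apply (z : Fin p) (x y : Fin p → ℝ) :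
    lorB z x y = x z * y z - ∑ i ∈ univ.erase z, x i * y i := rfl

/-- The closed forward cone -/
def coneK (z : Fin p) : Set (Fin p → ℝ) :=
  {x | 0 ≤ x z ∧ ∑ i ∈ univ.erase z, x i * x i ≤ x z * x z}

lemma lorB_nonneg (z : Fin p) {x y : Fin p → ℝ} (hx : x ∈ coneK z) (hy : y ∈ coneK z) :
    0 ≤ lorB z x y := by
  obtain ⟨hx0, hx⟩ := hx; obtain ⟨hy0, hy⟩ := hy
  have hcs := Finset.sum_mul_sq_le_sq_mul_sq (univ.erase z) x y
  have hx' : ∑ i ∈ univ.erase z, x i ^ 2 ≤ x z ^ 2 := by simpa [sq] using hx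
  have hy' : ∑ i ∈ univ.erase z, y i ^ 2 ≤ y z ^ 2 := by simpa [sq] using hy
  have hSx0 : (0:ℝ) ≤ ∑ i ∈ univ.erase z, x i ^ 2 := sum_nonneg fun i _ => sq_nonneg _
  have hSy0 : (0:ℝ) ≤ ∑ i ∈ univ.erase z, y i ^ 2 := sum_nonneg fun i _ => sq_nonneg _
  have h1 : (∑ i ∈ univ.erase z, x i * y i) ^ 2 ≤ (x z) ^ 2 * (y z) ^ 2 := by
    nlinarith [hcs, hx', hy', hSx0, hSy0, sq_nonneg (x z), sq_nonneg (y z)]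
  have h2 : ∑ i ∈ univ.erase z, x i * y i ≤ x z * y z := by
    nlinarith [h1, mul_nonneg hx0 hy0]
  rw [lorB_apply]; linarith

lemma lorB_self_nonneg (z : Fin p) {x : Fin p → ℝ} (hx : x ∈ coneK z) : 0 ≤ lorB z x x := by
  rw [lorB_apply]; linarith [hx.2]

lemma coneK_eq_zero (z : Fin p) {x : Fin p → ℝ} (hx : x ∈ coneK z) (hz : x z = 0) : x = 0 := by
  obtain ⟨-, hx⟩ := hx
  rw [hz, mul_zero] at hx
  have h0 : ∀ i ∈ univ.erase z, x i * x i = 0 :=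
    (Finset.sum_eq_zero_iff_of_nonneg fun i _ => mul_self_nonneg _).1
      (le_antisymm hx (Finset.sum_nonneg fun i _ => mul_self_nonneg _))
  funext i
  by_cases hiz : i = z
  · simpa [hiz] using hz
  · exact mul_self_eq_zero.1 (h0 i (Finset.mem_erase.2 ⟨hiz, Finset.mem_univ i⟩))

lemma lorB_eq_zero_smul (z : Fin p) {x y : Fin p → ℝ} (hx : x ∈ coneK z) (hy : y ∈ coneK z)
    (h : lorB z x y = 0) : y z • x = x z • y := by
  obtain ⟨hx0, hx2⟩ := hx; obtain ⟨hy0, hy2⟩ := hy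
  have hxy : ∑ i ∈ univ.erase z, x i * y i = x z * y z := by
    rw [lorB_apply] at h; linarith
  have hsum : ∑ i ∈ univ.erase z, (y z * x i - x z * y i) * (y z * x i - x z * y i)
      = y z * y z * (∑ i ∈ univ.erase z, x i * x i)
        - 2 * (y z * x z) * (∑ i ∈ univ.erase z, x i * y i)
        + x z * x z * (∑ i ∈ univ.erase z, y i * y i) := by
    rw [Finset.mul_sum, Finset.mul_sum, Finset.mul_sum, ← Finset.sum_sub_distrib,
      ← Finset.sum_add_distrib]
    exact Finset.sum_congr rfl fun i _ => by ring
  have hle : ∑ i ∈ univ.erase z, (y z * x i - x z * y i) * (y z * x i - x z * y i) ≤ 0 := by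
    rw [hsum, hxy]
    nlinarith [mul_le_mul_of_nonneg_left hx2 (mul_nonneg hy0 hy0),
      mul_le_mul_of_nonneg_left hy2 (mul_nonneg hx0 hx0)]
  have h0 : ∀ i ∈ univ.erase z, (y z * x i - x z * y i) * (y z * x i - x z * y i) = 0 :=
    (Finset.sum_eq_zero_iff_of_nonneg fun i _ => mul_self_nonneg _).1
      (le_antisymm hle (Finset.sum_nonneg fun i _ => mul_self_nonneg _))
  funext i
  by_cases hiz : i = z
  · subst hiz; simp only [Pi.smul_apply, smul_eq_mul]; ring
  · have := mul_self_eq_zero.1 (h0 i (Finset.mem_erase.2 ⟨hiz, Finset.mem_univ i⟩))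
    simp only [Pi.smul_apply, smul_eq_mul]
    linarith

end aux2

section aux3
variable {p : ℕ}

lemma continuous_lorB_self (z : Fin p) : Continuous fun x : Fin p → ℝ => lorB z x x := by
  simp only [lorB_apply]
  exact ((continuous_apply z).mul (continuous_apply z)).sub
    (continuous_finset_sum _ fun i _ => (continuous_apply i).mul (continuous_apply i))

lemma isClosed_coneK (z : Fin p) : IsClosed (coneK z) := by
  have h1 : IsClosed {x : Fin p → ℝ | 0 ≤ x z} := isClosed_le continuous_const (continuous_apply z)
  have h2 : IsClosed {x : Fin p → ℝ | ∑ i ∈ univ.erase z, x i * x i ≤ x z * x z} :=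
    isClosed_le (continuous_finset_sum _ fun i _ => (continuous_apply i).mul (continuous_apply i))
      ((continuous_apply z).mul (continuous_apply z))
  exact h1.inter h2

lemma closure_component_subset_coneK (z : Fin p) {u : Fin p → ℝ}
    (hu : 0 < lorB z u u) (huz : 0 < u z) :
    closure (connectedComponentIn {x : Fin p → ℝ | 0 < lorB z x x} u) ⊆ coneK z := by
  set S : Set (Fin p → ℝ) := {x | 0 < lorB z x x} with hS
  set Up : Set (Fin p → ℝ) := {x | 0 < lorB z x x ∧ 0 < x z} with hUp
  set Um : Set (Fin p → ℝ) := {x | 0 < lorB z x x ∧ x z < 0} with hUm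
  have hUpo : IsOpen Up :=
    (isOpen_lt continuous_const (continuous_lorB_self z)).inter
      (isOpen_lt continuous_const (continuous_apply z))
  have hUmo : IsOpen Um :=
    (isOpen_lt continuous_const (continuous_lorB_self z)).inter
      ((continuous_apply z).isOpen_preimage (Set.Iio 0) isOpen_Iio)
  have hsub : S ⊆ Up ∪ Um := by
    intro x hx
    have hq : 0 < lorB z x x := hx
    have hS0 : (0:ℝ) ≤ ∑ i ∈ univ.erase z, x i * x i := sum_nonneg fun i _ => mul_self_nonneg _
    have hxz : x z ≠ 0 := by
      intro h0
      rw [lorB_apply, h0] at hq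
      linarith
    rcases hxz.lt_or_gt with h | h
    · exact Or.inr ⟨hq, h⟩
    · exact Or.inl ⟨hq, h⟩
  have hdisj : Disjoint Up Um := by
    rw [Set.disjoint_left]
    rintro x ⟨-, h1⟩ ⟨-, h2⟩
    linarith
  have hcomp : connectedComponentIn S u ⊆ Up := by
    refine IsPreconnected.subset_left_of_subset_union hUpo hUmo hdisj
      ((connectedComponentIn_subset S u).trans hsub) ?_ isPreconnected_connectedComponentIn
    exact ⟨u, mem_connectedComponentIn hu, hu, huz⟩
  have hUpK : Up ⊆ coneK z := by
    rintro x ⟨hq, hz⟩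
    rw [lorB_apply] at hq
    exact ⟨le_of_lt hz, by linarith⟩
  exact closure_minimal (hcomp.trans hUpK) (isClosed_coneK z)

end aux3

lemma offDiag_univ_eq {n : ℕ} :
    (univ : Finset (Fin n)).offDiag = (univ ×ˢ univ).filter (fun q => q.1 ≠ q.2) := by
  ext q; simp [Finset.mem_offDiag]

lemma sum_offDiag_eq {n : ℕ} (F : Fin n × Fin n → ℝ) :
    ∑ q ∈ (univ : Finset (Fin n)).offDiag, F q = ∑ i, ∑ j ∈ univ.erase i, F (i, j) := by
  rw [offDiag_univ_eq, Finset.sum_filter, Finset.sum_product]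
  refine Finset.sum_congr rfl fun i _ => ?_
  rw [← Finset.sum_filter, Finset.filter_ne]

lemma prod_offDiag_eq {n : ℕ} (F : Fin n × Fin n → ℝ) :
    ∏ q ∈ (univ : Finset (Fin n)).offDiag, F q = ∏ i, ∏ j ∈ univ.erase i, F (i, j) := by
  rw [offDiag_univ_eq, Finset.prod_filter, Finset.prod_product]
  refine Finset.prod_congr rfl fun i _ => ?_
  rw [← Finset.prod_filter, Finset.filter_ne]

lemma prod_offDiag_eq' {n : ℕ} (F : Fin n × Fin n → ℝ) :
    ∏ q ∈ (univ : Finset (Fin n)).offDiag, F q = ∏ i, ∏ j ∈ univ.erase i, F (j, i) := by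
  rw [offDiag_univ_eq, Finset.prod_filter, Finset.prod_product, Finset.prod_comm]
  refine Finset.prod_congr rfl fun i _ => ?_
  rw [← Finset.prod_filter]
  have : (univ.filter fun j : Fin n => j ≠ i) = univ.erase i := Finset.filter_ne' univ i
  rw [this]

lemma lorB_sum_sum {p : ℕ} (z : Fin p) {n : ℕ} (t : Fin n → ℝ) (μ : Fin n → Fin p → ℝ) :
    lorB z (∑ i, t i • μ i) (∑ i, t i • μ i)
      = ∑ i, ∑ j, t i * t j * lorB z (μ i) (μ j) := by
  rw [LinearMap.BilinForm.sum_left]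
  refine Finset.sum_congr rfl fun i _ => ?_
  rw [LinearMap.BilinForm.sum_right]
  refine Finset.sum_congr rfl fun j _ => ?_
  rw [LinearMap.BilinForm.smul_left, LinearMap.BilinForm.smul_right]
  ring

set_option maxHeartbeats 2000000 in
/-- Let `λ₀, …, λ_{n-1}` (with `n = m + 2 ≥ 2`) be linearly independent vectors
in the closure of one connected component `C⁺` of the positive cone of a real quadratic
space of signature `(1, p-1)`.  Then for any `A` with `0 ≤ A ≤ 1 - 2/n` there is `c > 0`
such that `Q (t₀ λ₀ + ⋯ + t_{n-1} λ_{n-1}) ≥ c · t₀^(2/n + A) · (t₁ ⋯ t_{n-1})^(2/n - A/(n-1))`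
for all `t₀, …, t_{n-1} ≥ 0`. -/
theorem stmt3 {p m : ℕ} (hp : 1 ≤ p) {V : Type*} [NormedAddCommGroup V] [NormedSpace ℝ V]
    [FiniteDimensional ℝ V] (Q : QuadraticForm ℝ V)
    (hsig : Q.Equivalent (QuadraticMap.weightedSumSquares ℝ
      (fun i : Fin p => if (i : ℕ) = 0 then (1 : ℝ) else -1)))
    (v₀ : V) (hv₀ : 0 < Q v₀)
    (lam : Fin (m + 2) → V)
    (hlam : ∀ i, lam i ∈ closure (connectedComponentIn {v : V | 0 < Q v} v₀))
    (hindep : LinearIndependent ℝ lam)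
    (A : ℝ) (hA0 : 0 ≤ A) (hA1 : A ≤ 1 - 2 / (m + 2 : ℝ)) :
    ∃ c : ℝ, 0 < c ∧ ∀ t : Fin (m + 2) → ℝ, (∀ i, 0 ≤ t i) →
      c * (t 0) ^ (2 / (m + 2 : ℝ) + A) *
        (∏ i ∈ univ.erase 0, t i) ^ (2 / (m + 2 : ℝ) - A / (m + 1 : ℝ))
        ≤ Q (∑ i, t i • lam i) := by
  classical
  obtain ⟨f⟩ := hsig
  set z : Fin p := ⟨0, hp⟩ with hzdef
  -- Q in coordinates
  have hQ : ∀ v : V, Q v = lorB z (f v) (f v) := by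
    intro v
    rw [← f.map_app v, QuadraticMap.weightedSumSquares_apply, lorB_apply]
    rw [← Finset.add_sum_erase _ _ (Finset.mem_univ z)]
    have h1 : (if ((z : Fin p) : ℕ) = 0 then (1:ℝ) else -1) • (f v z * f v z)
        = f v z * f v z := by
      rw [if_pos rfl, one_smul]
    have h2 : ∀ i ∈ univ.erase z,
        (if ((i : Fin p) : ℕ) = 0 then (1:ℝ) else -1) • (f v i * f v i)
          = -(f v i * f v i) := by
      intro i hi
      have hine : (i : ℕ) ≠ 0 := by
        intro h
        exact (Finset.mem_erase.1 hi).1 (Fin.ext h)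
      rw [if_neg hine]
      simp
    rw [h1, Finset.sum_congr rfl h2, Finset.sum_neg_distrib, ← sub_eq_add_neg]
  have hfc : Continuous fun v : V => (f v : Fin p → ℝ) :=
    (f.toLinearEquiv : V →ₗ[ℝ] (Fin p → ℝ)).continuous_of_finiteDimensional
  have hq0 : 0 < lorB z (f v₀) (f v₀) := by rw [← hQ]; exact hv₀
  have hfz : f v₀ z ≠ 0 := by
    intro h0
    rw [lorB_apply, h0] at hq0
    have : (0:ℝ) ≤ ∑ i ∈ univ.erase z, f v₀ i * f v₀ i :=
      Finset.sum_nonneg fun i _ => mul_self_nonneg _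
    linarith
  set ε : ℝ := if 0 < f v₀ z then 1 else -1 with hεdef
  have hε : ε = 1 ∨ ε = -1 := by
    by_cases h : 0 < f v₀ z
    · exact Or.inl (if_pos h)
    · exact Or.inr (if_neg h)
  have hεne : ε ≠ 0 := by rcases hε with h | h <;> rw [h] <;> norm_num
  have hε2 : ε * ε = 1 := by rcases hε with h | h <;> rw [h] <;> norm_num
  have hεz : 0 < ε * f v₀ z := by
    by_cases h : 0 < f v₀ z
    · rw [hεdef, if_pos h, one_mul]; exact h
    · rw [hεdef, if_neg h]
      have : f v₀ z < 0 := lt_of_le_of_ne (not_lt.1 h) hfz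
      nlinarith
  set g : V → (Fin p → ℝ) := fun v => ε • (f v : Fin p → ℝ) with hgdef
  have hgc : Continuous g := hfc.const_smul ε
  have hinv : ∀ x y : Fin p → ℝ, lorB z (ε • x) (ε • y) = lorB z x y := by
    intro x y
    rw [LinearMap.BilinForm.smul_left, LinearMap.BilinForm.smul_right, ← mul_assoc, hε2, one_mul]
  have hQg : ∀ v : V, Q v = lorB z (g v) (g v) := fun v => by
    rw [hQ v, ← hinv (f v) (f v)]
  set u : Fin p → ℝ := g v₀ with hudef
  have hu : 0 < lorB z u u := by rw [← hQg]; exact hv₀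
  have huz : 0 < u z := by
    rw [hudef]
    simpa [hgdef] using hεz
  set μ : Fin (m + 2) → (Fin p → ℝ) := fun i => g (lam i) with hμdef
  -- each μ i lies in the closed cone
  have hK : ∀ i, μ i ∈ coneK z := by
    have himg : g '' connectedComponentIn {v : V | 0 < Q v} v₀
        ⊆ connectedComponentIn {x : Fin p → ℝ | 0 < lorB z x x} u := by
      apply IsPreconnected.subset_connectedComponentIn
      · exact isPreconnected_connectedComponentIn.image g hgc.continuousOn
      · exact Set.mem_image_of_mem g (mem_connectedComponentIn hv₀)
      · rintro x ⟨v, hv, rfl⟩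
        have : v ∈ {v : V | 0 < Q v} := connectedComponentIn_subset _ _ hv
        have h' : 0 < Q v := this
        rw [hQg v] at h'
        exact h'
    intro i
    refine closure_component_subset_coneK z hu huz ?_
    refine closure_mono himg ?_
    exact image_closure_subset_closure_image hgc (Set.mem_image_of_mem g (hlam i))
  have hμzero : ∀ i : Fin (m+2), μ i ≠ 0 := by
    intro i h0
    have hf0 : (f (lam i) : Fin p → ℝ) = 0 := by
      have := h0
      rw [hμdef] at this
      simp only [hgdef] at this
      exact (smul_eq_zero.1 this).resolve_left hεne
    have : lam i = 0 := by
      have h2 : f.toLinearEquiv (lam i) = 0 := hf0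
      exact (LinearEquiv.map_eq_zero_iff _).1 h2
    exact hindep.ne_zero i this
  have hμz : ∀ i, 0 < μ i z := by
    intro i
    rcases (hK i).1.lt_or_eq with h | h
    · exact h
    · exact absurd (coneK_eq_zero z (hK i) h.symm) (hμzero i)
  -- strict positivity of the off-diagonal pairings
  have hmap : ∀ (c : ℝ) (x : V), (f (c • x) : Fin p → ℝ) = c • (f x : Fin p → ℝ) :=
    fun c x => f.toLinearEquiv.map_smul c x
  have hpos : ∀ i j : Fin (m+2), i ≠ j → 0 < lorB z (μ i) (μ j) := by
    intro i j hij
    rcases (lorB_nonneg z (hK i) (hK j)).lt_or_eq with h | h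
    · exact h
    · exfalso
      have hsm : μ j z • μ i = μ i z • μ j :=
        lorB_eq_zero_smul z (hK i) (hK j) h.symm
      -- transfer the relation back to V
      have hfij : f (μ j z • lam i) = f (μ i z • lam j) := by
        apply smul_right_injective (Fin p → ℝ) hεne
        show ε • (f (μ j z • lam i) : Fin p → ℝ) = ε • (f (μ i z • lam j) : Fin p → ℝ)
        rw [hmap, hmap, smul_comm ε (μ j z), smul_comm ε (μ i z)]
        exact hsm
      have hlin : μ j z • lam i = μ i z • lam j := f.toLinearEquiv.injective hfij
      have hsum0 : ∑ k, (if k = i then μ j z else if k = j then -(μ i z) else 0) • lam k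
          = 0 := by
        rw [← Finset.add_sum_erase _ _ (Finset.mem_univ i),
          ← Finset.add_sum_erase _ _ (Finset.mem_erase.2 ⟨Ne.symm hij, Finset.mem_univ j⟩)]
        have hrest : ∀ k ∈ (univ.erase i).erase j,
            (if k = i then μ j z else if k = j then -(μ i z) else 0) • lam k = 0 := by
          intro k hk
          have hk1 : k ≠ j := (Finset.mem_erase.1 hk).1
          have hk2 : k ≠ i := (Finset.mem_erase.1 ((Finset.mem_erase.1 hk).2)).1
          rw [if_neg hk2, if_neg hk1, zero_smul]
        rw [Finset.sum_eq_zero hrest, if_pos rfl, if_neg (Ne.symm hij), if_pos rfl,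
          add_zero, neg_smul, hlin]
        abel
      have := Fintype.linearIndependent_iff.1 hindep _ hsum0 j
      rw [if_neg (Ne.symm hij), if_pos rfl, neg_eq_zero] at this
      exact (hμz i).ne' this
  -- arithmetic preliminaries
  have hm1 : (0:ℝ) < (m:ℝ) + 1 := by positivity
  have hm2 : (0:ℝ) < (m:ℝ) + 2 := by positivity
  set al : ℝ := 2 / (m + 2 : ℝ) + A with hal
  set B : ℝ := 2 / (m + 2 : ℝ) - A / (m + 1 : ℝ) with hB
  set a : ℝ := al / (2 * ((m:ℝ) + 1)) with ha
  set vv : ℝ := (B - 2 * a) / (2 * (m:ℝ)) with hvv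
  have hal0 : 0 ≤ al := by
    have : 0 ≤ 2 / ((m:ℝ) + 2) := by positivity
    rw [hal]; linarith
  have hal1 : al ≤ 1 := by rw [hal]; linarith
  have hB1 : B ≤ 1 := by
    have h2 : 2 / ((m:ℝ) + 2) ≤ 1 := by
      rw [div_le_one hm2]; linarith
    have h3 : 0 ≤ A / ((m:ℝ) + 1) := div_nonneg hA0 hm1.le
    rw [hB]; linarith
  have hBa : B - 2 * a = 2 / ((m:ℝ) + 1) * (1 - 2 / ((m:ℝ) + 2) - A) := by
    rw [hB, ha, hal]; field_simp; ring
  have hBa0 : 0 ≤ B - 2 * a := by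
    rw [hBa]
    apply mul_nonneg (by positivity)
    linarith
  have ha0 : 0 ≤ a := div_nonneg hal0 (by positivity)
  have ha1 : a ≤ 1 := by
    rw [ha, div_le_one (by positivity)]; linarith
  have hv0 : 0 ≤ vv := div_nonneg hBa0 (by positivity)
  have hv1 : vv ≤ 1 := by
    rcases Nat.eq_zero_or_pos m with hm | hm
    · rw [hvv, hm]; norm_num
    · have hm' : (1:ℝ) ≤ (m:ℝ) := by exact_mod_cast hm
      rw [hvv, div_le_one (by positivity)]
      linarith
  have hrow0 : 2 * (((m:ℝ) + 1) * a) = al := by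
    rw [ha]; field_simp
  have hrowk : 2 * (a + (m:ℝ) * vv) = B := by
    rcases Nat.eq_zero_or_pos m with hm | hm
    · have hm0 : (m:ℝ) = 0 := by rw [hm]; simp
      have hA' : A ≤ 0 := by
        rw [hal] at *
        rw [hm0] at hA1
        norm_num at hA1
        exact hA1
      have hA : A = 0 := le_antisymm hA' hA0
      rw [hvv, hB, ha, hal, hm0, hA]
      norm_num
    · have hmne : (m:ℝ) ≠ 0 := by
        have : (0:ℝ) < (m:ℝ) := by exact_mod_cast hm
        exact this.ne'
      rw [hvv]
      field_simp
      ring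
  have halB : al + ((m:ℝ) + 1) * B = 2 := by
    rw [hal, hB]; field_simp; ring
  have hsum1 : ((m:ℝ)+1) * a + ((m:ℝ)+1) * (a + (m:ℝ)*vv) = 1 := by
    linear_combination (1/2) * hrow0 + (((m:ℝ)+1)/2) * hrowk + (1/2) * halB
  -- the weight function
  set w : Fin (m+2) × Fin (m+2) → ℝ := fun q => if q.1 = 0 ∨ q.2 = 0 then a else vv with hw
  have hwnn : ∀ q, 0 ≤ w q := by
    intro q; rw [hw]; dsimp only; split
    · exact ha0
    · exact hv0
  have hwle : ∀ q, w q ≤ 1 := by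
    intro q; rw [hw]; dsimp only; split
    · exact ha1
    · exact hv1
  have hwsymm : ∀ i j : Fin (m+2), w (j, i) = w (i, j) := by
    intro i j
    simp only [hw]
    exact if_congr or_comm rfl rfl
  have hrow : ∀ i : Fin (m+2), ∑ j ∈ univ.erase i, w (i, j)
      = if i = 0 then ((m:ℝ)+1) * a else a + (m:ℝ) * vv := by
    intro i
    by_cases hi : i = 0
    · subst hi
      rw [if_pos rfl]
      have hconst : ∀ j ∈ univ.erase (0 : Fin (m+2)), w (0, j) = a := by
        intro j hj; rw [hw]; exact if_pos (Or.inl rfl)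
      rw [Finset.sum_congr rfl hconst, Finset.sum_const,
        Finset.card_erase_of_mem (Finset.mem_univ _), Finset.card_univ, Fintype.card_fin,
        nsmul_eq_mul]
      have h21 : m + 2 - 1 = m + 1 := by omega
      rw [h21]
      push_cast
      ring
    · rw [if_neg hi]
      have h0m : (0 : Fin (m+2)) ∈ univ.erase i :=
        Finset.mem_erase.2 ⟨fun h => hi h.symm, Finset.mem_univ _⟩
      rw [← Finset.add_sum_erase _ _ h0m]
      have hconst : ∀ j ∈ (univ.erase i).erase 0, w (i, j) = vv := by
        intro j hj
        rw [hw]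
        refine if_neg ?_
        push_neg
        exact ⟨hi, (Finset.mem_erase.1 hj).1⟩
      have hwa : w (i, (0 : Fin (m+2))) = a := by rw [hw]; exact if_pos (Or.inr rfl)
      rw [Finset.sum_congr rfl hconst, Finset.sum_const, hwa, nsmul_eq_mul]
      have hcard : ((univ.erase i).erase (0 : Fin (m+2))).card = m := by
        rw [Finset.card_erase_of_mem h0m, Finset.card_erase_of_mem (Finset.mem_univ _),
          Finset.card_univ, Fintype.card_fin]
        omega
      rw [hcard]
  have hwsum : ∑ q ∈ (univ : Finset (Fin (m+2))).offDiag, w q = 1 := by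
    rw [sum_offDiag_eq (fun q => w q)]
    rw [Finset.sum_congr rfl fun i _ => hrow i]
    rw [← Finset.add_sum_erase _ _ (Finset.mem_univ (0 : Fin (m+2))), if_pos rfl]
    have hconst : ∀ i ∈ univ.erase (0 : Fin (m+2)),
        (if i = 0 then ((m:ℝ)+1) * a else a + (m:ℝ) * vv) = a + (m:ℝ) * vv := by
      intro i hi; exact if_neg (Finset.mem_erase.1 hi).1
    rw [Finset.sum_congr rfl hconst, Finset.sum_const,
      Finset.card_erase_of_mem (Finset.mem_univ _), Finset.card_univ, Fintype.card_fin,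
      nsmul_eq_mul]
    have h21 : m + 2 - 1 = m + 1 := by omega
    rw [h21]
    push_cast
    linarith [hsum1]
  -- the constant
  have hone : ((0 : Fin (m+2)), (1 : Fin (m+2))) ∈ (univ : Finset (Fin (m+2))).offDiag := by
    refine Finset.mem_offDiag.2 ⟨Finset.mem_univ _, Finset.mem_univ _, ?_⟩
    exact zero_ne_one
  have hnemp : ((univ : Finset (Fin (m+2))).offDiag).Nonempty := ⟨_, hone⟩
  set c : ℝ := ((univ : Finset (Fin (m+2))).offDiag).inf' hnemp
      (fun q => lorB z (μ q.1) (μ q.2)) with hc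
  have hcpos : 0 < c := by
    rw [hc, Finset.lt_inf'_iff]
    intro q hq
    exact hpos q.1 q.2 (Finset.mem_offDiag.1 hq).2.2
  refine ⟨c, hcpos, ?_⟩
  intro t ht
  have hσnn : ∀ i : Fin (m+2), 0 ≤ ∑ j ∈ univ.erase i, w (i, j) :=
    fun i => Finset.sum_nonneg fun j _ => hwnn _
  have hgm1 : ∏ q ∈ (univ : Finset (Fin (m+2))).offDiag, (t q.1 * t q.2) ^ w q
      = t 0 ^ al * (∏ i ∈ univ.erase 0, t i) ^ B := by
    have h1 : ∀ q ∈ (univ : Finset (Fin (m+2))).offDiag,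
        (t q.1 * t q.2) ^ w q = t q.1 ^ w q * t q.2 ^ w q :=
      fun q _ => Real.mul_rpow (ht _) (ht _)
    rw [Finset.prod_congr rfl h1, Finset.prod_mul_distrib]
    have h2 : ∏ q ∈ (univ : Finset (Fin (m+2))).offDiag, t q.1 ^ w q
        = ∏ i, t i ^ (∑ j ∈ univ.erase i, w (i, j)) := by
      rw [prod_offDiag_eq (fun q => t q.1 ^ w q)]
      exact Finset.prod_congr rfl fun i _ =>
        (Real.rpow_sum_of_nonneg (ht i) fun j _ => hwnn _).symm
    have h3 : ∏ q ∈ (univ : Finset (Fin (m+2))).offDiag, t q.2 ^ w q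
        = ∏ i, t i ^ (∑ j ∈ univ.erase i, w (i, j)) := by
      rw [prod_offDiag_eq' (fun q => t q.2 ^ w q)]
      refine Finset.prod_congr rfl fun i _ => ?_
      have hsy : ∀ j ∈ univ.erase i, t i ^ w (j, i) = t i ^ w (i, j) := by
        intro j _
        rw [hwsymm]
      rw [Finset.prod_congr rfl hsy]
      exact (Real.rpow_sum_of_nonneg (ht i) fun j _ => hwnn _).symm
    rw [h2, h3, ← Finset.prod_mul_distrib]
    have h4 : ∀ i ∈ (univ : Finset (Fin (m+2))),
        t i ^ (∑ j ∈ univ.erase i, w (i, j)) * t i ^ (∑ j ∈ univ.erase i, w (i, j))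
          = t i ^ (2 * ∑ j ∈ univ.erase i, w (i, j)) := by
      intro i _
      rw [two_mul, Real.rpow_add_of_nonneg (ht i) (hσnn i) (hσnn i)]
    rw [Finset.prod_congr rfl h4,
      ← Finset.mul_prod_erase _ _ (Finset.mem_univ (0 : Fin (m+2)))]
    have h5 : t 0 ^ (2 * ∑ j ∈ univ.erase (0 : Fin (m+2)), w (0, j)) = t 0 ^ al := by
      congr 1
      rw [hrow 0, if_pos rfl]
      exact hrow0
    have h6 : ∀ i ∈ univ.erase (0 : Fin (m+2)),
        t i ^ (2 * ∑ j ∈ univ.erase i, w (i, j)) = t i ^ B := by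
      intro i hi
      congr 1
      rw [hrow i, if_neg (Finset.mem_erase.1 hi).1]
      exact hrowk
    rw [h5, Finset.prod_congr rfl h6, Real.finset_prod_rpow _ _ (fun i _ => ht i)]
  have hgm := Real.geom_mean_le_arith_mean_weighted
    ((univ : Finset (Fin (m+2))).offDiag) w (fun q => t q.1 * t q.2)
    (fun q _ => hwnn q) hwsum (fun q _ => mul_nonneg (ht _) (ht _))
  have hgsum : (g (∑ i, t i • lam i) : Fin p → ℝ) = ∑ i, t i • μ i := by
    rw [hgdef]
    dsimp only
    have hfs : (f (∑ i, t i • lam i) : Fin p → ℝ)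
        = ∑ i, t i • (f (lam i) : Fin p → ℝ) := by
      rw [show (f (∑ i, t i • lam i) : Fin p → ℝ)
          = f.toLinearEquiv (∑ i, t i • lam i) from rfl, map_sum]
      exact Finset.sum_congr rfl fun i _ => f.toLinearEquiv.map_smul _ _
    rw [hfs, Finset.smul_sum]
    exact Finset.sum_congr rfl fun i _ => smul_comm _ _ _
  have hQsum : Q (∑ i, t i • lam i) = ∑ i, ∑ j, t i * t j * lorB z (μ i) (μ j) := by
    rw [hQg, hgsum, lorB_sum_sum]
  calc c * t 0 ^ al * (∏ i ∈ univ.erase 0, t i) ^ B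
      = c * (t 0 ^ al * (∏ i ∈ univ.erase 0, t i) ^ B) := by ring
    _ = c * ∏ q ∈ (univ : Finset (Fin (m+2))).offDiag, (t q.1 * t q.2) ^ w q := by
        rw [hgm1]
    _ ≤ c * ∑ q ∈ (univ : Finset (Fin (m+2))).offDiag, w q * (t q.1 * t q.2) :=
        mul_le_mul_of_nonneg_left hgm hcpos.le
    _ ≤ c * ∑ q ∈ (univ : Finset (Fin (m+2))).offDiag, t q.1 * t q.2 := by
        refine mul_le_mul_of_nonneg_left (Finset.sum_le_sum fun q _ => ?_) hcpos.le
        exact mul_le_of_le_one_left (mul_nonneg (ht _) (ht _)) (hwle q)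
    _ = ∑ q ∈ (univ : Finset (Fin (m+2))).offDiag, c * (t q.1 * t q.2) :=
        Finset.mul_sum _ _ _
    _ ≤ ∑ q ∈ (univ : Finset (Fin (m+2))).offDiag,
          t q.1 * t q.2 * lorB z (μ q.1) (μ q.2) := by
        refine Finset.sum_le_sum fun q hq => ?_
        rw [mul_comm]
        exact mul_le_mul_of_nonneg_left (Finset.inf'_le _ hq) (mul_nonneg (ht _) (ht _))
    _ ≤ ∑ q ∈ (univ : Finset (Fin (m+2))) ×ˢ univ,
          t q.1 * t q.2 * lorB z (μ q.1) (μ q.2) := by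
        refine Finset.sum_le_sum_of_subset_of_nonneg ?_ fun q hq _ => ?_
        · intro q hq
          exact Finset.mem_product.2 ⟨Finset.mem_univ _, Finset.mem_univ _⟩
        · exact mul_nonneg (mul_nonneg (ht _) (ht _)) (lorB_nonneg z (hK _) (hK _))
    _ = ∑ i, ∑ j, t i * t j * lorB z (μ i) (μ j) := by
        rw [Finset.sum_product]
    _ = Q (∑ i, t i • lam i) := hQsum.symm
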